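/- Let |φ⟩ = Σ a_{ijk}|ijk⟩ be a unit vector in ℂ^{d1}⊗ℂ^{d2}⊗ℂ^{d3} with d1, d2, d3 ≥ 2. Then C_3²(|φ⟩) ≥ (1/((d1−1)(d2−1)(d3−1))) · Σ_sub Σ_{1≤m<n≤3} C_{mn}²(|φ⟩_{2⊗2⊗2}), where the outer sum runs over all choices of index pairs i_1<i_2, j_1<j_2, k_1<k_2, |φ⟩_{2⊗2⊗2} = Σ_{i∈{i_1,i_2}, j∈{j_1,j_2}, k∈{k_1,k_2}} a_{ijk}|ijk⟩ is the corresponding unnormalized three-qubit substate, and C_{mn}(|φ⟩_{2⊗2⊗2}) is the two-qubit concurrence of the reduced matrix on qubits m,n of the unnormalized matrix |φ⟩_{2⊗2⊗2}⟨φ|_{2⊗2⊗2}. -/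

import Mathlib

open scoped BigOperators

namespace Stmt9

/-- The (unnormalized) projector `|v⟩⟨v|` associated to a vector `v`. -/
noncomputable def outer {I : Type*} (v : I → ℂ) : Matrix I I ℂ :=
  Matrix.of fun x y => v x * (starRingEnd ℂ) (v y)

variable {d1 d2 d3 : ℕ}

/-- `tr(ρ_α²)` for `α = {1}`. -/
noncomputable def tr1sq (ρ : Matrix (Fin d1 × Fin d2 × Fin d3) (Fin d1 × Fin d2 × Fin d3) ℂ) : ℂ :=
  ∑ i, ∑ p, (∑ j, ∑ k, ρ (i, j, k) (p, j, k)) * (∑ j, ∑ k, ρ (p, j, k) (i, j, k))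

/-- `tr(ρ_α²)` for `α = {2}`. -/
noncomputable def tr2sq (ρ : Matrix (Fin d1 × Fin d2 × Fin d3) (Fin d1 × Fin d2 × Fin d3) ℂ) : ℂ :=
  ∑ j, ∑ q, (∑ i, ∑ k, ρ (i, j, k) (i, q, k)) * (∑ i, ∑ k, ρ (i, q, k) (i, j, k))

/-- `tr(ρ_α²)` for `α = {3}`. -/
noncomputable def tr3sq (ρ : Matrix (Fin d1 × Fin d2 × Fin d3) (Fin d1 × Fin d2 × Fin d3) ℂ) : ℂ :=
  ∑ k, ∑ t, (∑ i, ∑ j, ρ (i, j, k) (i, j, t)) * (∑ i, ∑ j, ρ (i, j, t) (i, j, k))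

/-- `tr(ρ_α²)` for `α = {1,2}`. -/
noncomputable def tr12sq (ρ : Matrix (Fin d1 × Fin d2 × Fin d3) (Fin d1 × Fin d2 × Fin d3) ℂ) : ℂ :=
  ∑ i, ∑ p, ∑ j, ∑ q, (∑ k, ρ (i, j, k) (p, q, k)) * (∑ k, ρ (p, q, k) (i, j, k))

/-- `tr(ρ_α²)` for `α = {1,3}`. -/
noncomputable def tr13sq (ρ : Matrix (Fin d1 × Fin d2 × Fin d3) (Fin d1 × Fin d2 × Fin d3) ℂ) : ℂ :=
  ∑ i, ∑ p, ∑ k, ∑ t, (∑ j, ρ (i, j, k) (p, j, t)) * (∑ j, ρ (p, j, t) (i, j, k))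

/-- `tr(ρ_α²)` for `α = {2,3}`. -/
noncomputable def tr23sq (ρ : Matrix (Fin d1 × Fin d2 × Fin d3) (Fin d1 × Fin d2 × Fin d3) ℂ) : ℂ :=
  ∑ j, ∑ q, ∑ k, ∑ t, (∑ i, ρ (i, j, k) (i, q, t)) * (∑ i, ρ (i, q, t) (i, j, k))

/-- Tripartite pure-state concurrence
`C₃(|φ⟩) = 2^{1−3/2} √((2³−2) − Σ_α tr(ρ_α²))`, where `α` runs over the six
nonempty proper subsets of `{1,2,3}`. -/
noncomputable def pureC3 (φ : Fin d1 × Fin d2 × Fin d3 → ℂ) : ℝ :=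
  (2 : ℝ) ^ ((1 : ℝ) - (3 : ℝ) / 2) *
    Real.sqrt (((2 : ℝ) ^ (3 : ℕ) - 2) -
      (tr1sq (outer φ) + tr2sq (outer φ) + tr3sq (outer φ) +
        tr12sq (outer φ) + tr13sq (outer φ) + tr23sq (outer φ)).re)


/-- Reduced matrix of a three-qubit matrix on qubits 1 and 2. -/
noncomputable def red12 (σ : Matrix (Fin 2 × Fin 2 × Fin 2) (Fin 2 × Fin 2 × Fin 2) ℂ) :
    Matrix (Fin 2 × Fin 2) (Fin 2 × Fin 2) ℂ :=
  Matrix.of fun x y => ∑ k, σ (x.1, x.2, k) (y.1, y.2, k)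

/-- Reduced matrix of a three-qubit matrix on qubits 1 and 3. -/
noncomputable def red13 (σ : Matrix (Fin 2 × Fin 2 × Fin 2) (Fin 2 × Fin 2 × Fin 2) ℂ) :
    Matrix (Fin 2 × Fin 2) (Fin 2 × Fin 2) ℂ :=
  Matrix.of fun x y => ∑ j, σ (x.1, j, x.2) (y.1, j, y.2)

/-- Reduced matrix of a three-qubit matrix on qubits 2 and 3. -/
noncomputable def red23 (σ : Matrix (Fin 2 × Fin 2 × Fin 2) (Fin 2 × Fin 2 × Fin 2) ℂ) :
    Matrix (Fin 2 × Fin 2) (Fin 2 × Fin 2) ℂ :=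
  Matrix.of fun x y => ∑ i, σ (i, x.1, x.2) (i, y.1, y.2)

/-- Concurrence of a (possibly unnormalized) two-qubit vector with
coefficients `b`, `C = 2|b₁₁b₂₂ − b₁₂b₂₁|`. -/
noncomputable def C2pure (b : Fin 2 × Fin 2 → ℂ) : ℝ :=
  2 * ‖b (0, 0) * b (1, 1) - b (0, 1) * b (1, 0)‖

/-- Concurrence of a (not necessarily normalized) two-qubit positive
semidefinite matrix: `C(σ) = min Σᵢ C(|φ̃ᵢ⟩)` over all decompositions
`σ = Σᵢ |φ̃ᵢ⟩⟨φ̃ᵢ|` into unnormalized vectors. -/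
noncomputable def C2unnorm (σ : Matrix (Fin 2 × Fin 2) (Fin 2 × Fin 2) ℂ) : ℝ :=
  sInf {c : ℝ | ∃ (n : ℕ) (v : Fin n → (Fin 2 × Fin 2 → ℂ)),
    σ = ∑ i, outer (v i) ∧ c = ∑ i, C2pure (v i)}

/-- The (unnormalized) three-qubit substate of `a` determined by the index
pairs `i₁,i₂`, `j₁,j₂`, `k₁,k₂`. -/
noncomputable def subvec (a : Fin d1 × Fin d2 × Fin d3 → ℂ)
    (i₁ i₂ : Fin d1) (j₁ j₂ : Fin d2) (k₁ k₂ : Fin d3) : Fin 2 × Fin 2 × Fin 2 → ℂ :=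
  fun x => a (if x.1 = 0 then i₁ else i₂,
              if x.2.1 = 0 then j₁ else j₂,
              if x.2.2 = 0 then k₁ else k₂)


section helpers
variable {M : Type*} [AddCommMonoid M]
variable {A B C D E G : Type*} [Fintype A] [Fintype B] [Fintype C] [Fintype D] [Fintype E] [Fintype G]

lemma scongr {f g : A → M} (h : ∀ x, f x = g x) : ∑ x, f x = ∑ x, g x :=
  Finset.sum_congr rfl fun x _ => h x

lemma sc3 (f : A → B → C → M) :
    ∑ a, ∑ b, ∑ c, f a b c = ∑ c, ∑ a, ∑ b, f a b c := by
  calc ∑ a, ∑ b, ∑ c, f a b c = ∑ a, ∑ c, ∑ b, f a b c :=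
        scongr fun a => Finset.sum_comm
    _ = ∑ c, ∑ a, ∑ b, f a b c := Finset.sum_comm

lemma sc4 (f : A → B → C → D → M) :
    ∑ a, ∑ b, ∑ c, ∑ d, f a b c d = ∑ d, ∑ a, ∑ b, ∑ c, f a b c d := by
  calc ∑ a, ∑ b, ∑ c, ∑ d, f a b c d = ∑ a, ∑ d, ∑ b, ∑ c, f a b c d :=
        scongr fun a => sc3 (f a)
    _ = ∑ d, ∑ a, ∑ b, ∑ c, f a b c d := Finset.sum_comm

lemma sc5 (f : A → B → C → D → E → M) :
    ∑ a, ∑ b, ∑ c, ∑ d, ∑ e, f a b c d e = ∑ e, ∑ a, ∑ b, ∑ c, ∑ d, f a b c d e := by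
  calc ∑ a, ∑ b, ∑ c, ∑ d, ∑ e, f a b c d e = ∑ a, ∑ e, ∑ b, ∑ c, ∑ d, f a b c d e :=
        scongr fun a => sc4 (f a)
    _ = ∑ e, ∑ a, ∑ b, ∑ c, ∑ d, f a b c d e := Finset.sum_comm

lemma sc6 (f : A → B → C → D → E → G → M) :
    ∑ a, ∑ b, ∑ c, ∑ d, ∑ e, ∑ g, f a b c d e g
      = ∑ g, ∑ a, ∑ b, ∑ c, ∑ d, ∑ e, f a b c d e g := by
  calc ∑ a, ∑ b, ∑ c, ∑ d, ∑ e, ∑ g, f a b c d e g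
      = ∑ a, ∑ g, ∑ b, ∑ c, ∑ d, ∑ e, f a b c d e g := scongr fun a => sc5 (f a)
    _ = ∑ g, ∑ a, ∑ b, ∑ c, ∑ d, ∑ e, f a b c d e g := Finset.sum_comm

lemma ite_sum (c : Prop) [Decidable c] (f : A → M) :
    (if c then ∑ x, f x else 0) = ∑ x, (if c then f x else 0) := by
  by_cases h : c <;> simp [h]

lemma mulsum6 {R : Type*} [CommRing R] {c : R} {f : A → B → C → D → E → G → R} :
    c * (∑ a, ∑ b, ∑ x, ∑ d, ∑ e, ∑ g, f a b x d e g)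
      = ∑ a, ∑ b, ∑ x, ∑ d, ∑ e, ∑ g, c * f a b x d e g := by
  simp only [Finset.mul_sum]

end helpers


noncomputable def qf (v : Fin 2 × Fin 2 → ℂ) : ℂ := v (0,0) * v (1,1) - v (0,1) * v (1,0)

/-- symmetric bilinear cross term -/
noncomputable def dl (w0 w1 : Fin 2 × Fin 2 → ℂ) : ℂ :=
  w0 (0,0) * w1 (1,1) + w1 (0,0) * w0 (1,1) - w0 (0,1) * w1 (1,0) - w1 (0,1) * w0 (1,0)

lemma C2pure_eq (v : Fin 2 × Fin 2 → ℂ) : C2pure v = 2 * ‖qf v‖ := rfl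

lemma C2unnorm_le_of_decomp2 (σ : Matrix (Fin 2 × Fin 2) (Fin 2 × Fin 2) ℂ)
    (v0 v1 : Fin 2 × Fin 2 → ℂ) (h : σ = outer v0 + outer v1) :
    C2unnorm σ ≤ C2pure v0 + C2pure v1 := by
  apply csInf_le
  · refine ⟨0, fun c hc => ?_⟩
    obtain ⟨n, v, -, rfl⟩ := hc
    exact Finset.sum_nonneg fun i _ => mul_nonneg (by norm_num) (norm_nonneg _)
  · exact ⟨2, ![v0, v1], by simp [Fin.sum_univ_two, h], by simp [Fin.sum_univ_two]⟩

lemma C2unnorm_nonneg (σ : Matrix (Fin 2 × Fin 2) (Fin 2 × Fin 2) ℂ) : 0 ≤ C2unnorm σ :=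
  Real.sInf_nonneg (fun c hc => by
    obtain ⟨n, v, -, rfl⟩ := hc
    exact Finset.sum_nonneg fun i _ => mul_nonneg (by norm_num) (norm_nonneg _))

lemma exists_phase (z : ℂ) : ∃ u : ℂ, u * (starRingEnd ℂ) u = 1 ∧ u * u * z = (‖z‖ : ℂ) := by
  set θ : ℝ := -(Complex.arg z / 2) with hθ
  refine ⟨Complex.exp ((θ : ℂ) * Complex.I), ?_, ?_⟩
  · have hc : (starRingEnd ℂ) (Complex.exp ((θ : ℂ) * Complex.I)) =
        Complex.exp ((-θ : ℝ) * Complex.I) := by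
      rw [← Complex.exp_conj]
      congr 1
      simp [Complex.conj_ofReal]
    rw [hc, ← Complex.exp_add]
    have : (θ : ℂ) * Complex.I + (-θ : ℝ) * Complex.I = 0 := by
      push_cast; ring
    rw [this, Complex.exp_zero]
  · have h2 : Complex.exp ((θ : ℂ) * Complex.I) * Complex.exp ((θ : ℂ) * Complex.I) =
        Complex.exp ((-(Complex.arg z) : ℝ) * Complex.I) := by
      rw [← Complex.exp_add]
      congr 1
      rw [hθ]; push_cast; ring
    rw [h2]
    have h := Complex.norm_mul_exp_arg_mul_I z
    nth_rewrite 2 [← h]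
    rw [mul_comm ((‖z‖ : ℂ)) (Complex.exp ((Complex.arg z : ℝ) * Complex.I)), ← mul_assoc, ← Complex.exp_add,
      show ((-(Complex.arg z) : ℝ) : ℂ) * Complex.I + (Complex.arg z : ℝ) * Complex.I = 0 by push_cast; ring,
      Complex.exp_zero, one_mul]


lemma qf_mix (s u u' c1 c2 : ℂ) (w0 w1 : Fin 2 × Fin 2 → ℂ) :
    qf (fun x => s * (c1 * (u * w0 x) + c2 * (u' * w1 x))) =
      s*s*(c1*c1*(u*u)*qf w0 + c2*c2*(u'*u')*qf w1 + c1*c2*(u*u')*dl w0 w1) := by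
  simp only [qf, dl]; ring

lemma outer_mix (w0 w1 : Fin 2 × Fin 2 → ℂ) (s u u' : ℂ)
    (hu : u * (starRingEnd ℂ) u = 1) (hu' : u' * (starRingEnd ℂ) u' = 1)
    (hs : s * (starRingEnd ℂ) s = 1/2) :
    outer w0 + outer w1 =
      outer (fun x => s * ((1:ℂ) * (u * w0 x) + Complex.I * (u' * w1 x))) +
      outer (fun x => s * (Complex.I * (u * w0 x) + (1:ℂ) * (u' * w1 x))) := by
  ext x y
  simp only [outer, Matrix.add_apply, Matrix.of_apply, map_add, map_mul, Complex.conj_I, map_one]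
  linear_combination (-2*(s * (starRingEnd ℂ) s)*(w0 x * (starRingEnd ℂ) (w0 y))) * hu +
    (-2*(s * (starRingEnd ℂ) s)*(w1 x * (starRingEnd ℂ) (w1 y))) * hu' +
    (-2*(w0 x * (starRingEnd ℂ) (w0 y) + w1 x * (starRingEnd ℂ) (w1 y))) * hs +
    (s * (starRingEnd ℂ) s * (u * (starRingEnd ℂ) u) * (w0 x * (starRingEnd ℂ) (w0 y)) +
     s * (starRingEnd ℂ) s * (u' * (starRingEnd ℂ) u') * (w1 x * (starRingEnd ℂ) (w1 y))) * Complex.I_sq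

lemma keyC2 (w0 w1 : Fin 2 × Fin 2 → ℂ) :
    C2unnorm (outer w0 + outer w1) ^ 2 ≤
      4 * ‖qf w0‖ ^ 2 + 4 * ‖qf w1‖ ^ 2 +
        2 * ‖dl w0 w1‖ ^ 2 := by
  obtain ⟨u, hu, hu2⟩ := exists_phase (qf w0)
  obtain ⟨u', hu', hu2'⟩ := exists_phase (qf w1)
  have habsu : ‖u‖ = 1 := by
    have := Complex.mul_conj u
    rw [hu] at this
    have : Complex.normSq u = 1 := by exact_mod_cast this.symm
    rw [← Complex.sq_norm] at this
    nlinarith [norm_nonneg u]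
  have habsu' : ‖u'‖ = 1 := by
    have := Complex.mul_conj u'
    rw [hu'] at this
    have : Complex.normSq u' = 1 := by exact_mod_cast this.symm
    rw [← Complex.sq_norm] at this
    nlinarith [norm_nonneg u']
  set s : ℂ := (((Real.sqrt 2)⁻¹ : ℝ) : ℂ) with hsdef
  have hs : s * (starRingEnd ℂ) s = 1/2 := by
    rw [hsdef, Complex.conj_ofReal, ← Complex.ofReal_mul]
    rw [← Real.sqrt_inv]
    rw [Real.mul_self_sqrt (by norm_num)]
    norm_num
  have hss : s * s = 1/2 := by
    have := hs; rwa [hsdef, Complex.conj_ofReal, ← hsdef] at this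
  set α := qf w0
  set γ := qf w1
  set δ := dl w0 w1
  set C := C2unnorm (outer w0 + outer w1) with hC
  have hA : C ≤ 2 * ‖α‖ + 2 * ‖γ‖ := by
    have := C2unnorm_le_of_decomp2 (outer w0 + outer w1) w0 w1 rfl
    simpa [C2pure_eq] using this
  -- the second decomposition
  set v1 : Fin 2 × Fin 2 → ℂ := fun x => s * ((1:ℂ) * (u * w0 x) + Complex.I * (u' * w1 x))
  set v2 : Fin 2 × Fin 2 → ℂ := fun x => s * (Complex.I * (u * w0 x) + (1:ℂ) * (u' * w1 x))
  have hdec := outer_mix w0 w1 s u u' hu hu' hs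
  have hB0 : C ≤ C2pure v1 + C2pure v2 :=
    C2unnorm_le_of_decomp2 _ v1 v2 hdec
  set X : ℝ := ‖α‖ - ‖γ‖
  set W : ℂ := Complex.I * (u * u') * δ
  have hq1 : qf v1 = (1/2) * ((X : ℂ) + W) := by
    have h := qf_mix s u u' 1 Complex.I w0 w1
    rw [Complex.I_mul_I] at h
    rw [show (fun x => s * ((1:ℂ) * (u * w0 x) + Complex.I * (u' * w1 x))) = v1 from rfl] at h
    rw [h, hss]
    have hXc : (X : ℂ) = (‖α‖ : ℂ) - (‖γ‖ : ℂ) := by push_cast [X]; ring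
    rw [hXc, ← hu2, ← hu2']
    simp only [W]
    ring
  have hq2 : qf v2 = (1/2) * (-(X : ℂ) + W) := by
    have h := qf_mix s u u' Complex.I 1 w0 w1
    rw [Complex.I_mul_I] at h
    rw [show (fun x => s * (Complex.I * (u * w0 x) + (1:ℂ) * (u' * w1 x))) = v2 from rfl] at h
    rw [h, hss]
    have hXc : (X : ℂ) = (‖α‖ : ℂ) - (‖γ‖ : ℂ) := by push_cast [X]; ring
    rw [hXc, ← hu2, ← hu2']
    simp only [W]
    ring
  have habsW : ‖W‖ = ‖δ‖ := by
    simp only [W, norm_mul, Complex.norm_I, habsu, habsu']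
    ring
  have hB : C ≤ ‖(X:ℂ) + W‖ + ‖(X:ℂ) - W‖ := by
    refine hB0.trans ?_
    rw [C2pure_eq, C2pure_eq, hq1, hq2]
    have e1 : ‖(1/2 : ℂ) * ((X : ℂ) + W)‖ = (1/2) * ‖(X:ℂ) + W‖ := by
      rw [norm_mul]; norm_num
    have e2 : ‖(1/2 : ℂ) * (-(X : ℂ) + W)‖ = (1/2) * ‖(X:ℂ) - W‖ := by
      rw [norm_mul, show (-(X:ℂ) + W) = -((X:ℂ) - W) by ring, norm_neg]; norm_num
    rw [e1, e2]; ring_nf; rfl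
  have hpar : ‖(X:ℂ) + W‖ ^ 2 + ‖(X:ℂ) - W‖ ^ 2 =
      2 * X^2 + 2 * ‖δ‖ ^ 2 := by
    rw [Complex.sq_norm, Complex.sq_norm, Complex.normSq_add, Complex.normSq_sub,
      ← habsW, Complex.sq_norm, Complex.normSq_ofReal]
    ring
  have hC0 : 0 ≤ C := C2unnorm_nonneg _
  have hCB : C^2 ≤ (‖(X:ℂ) + W‖ + ‖(X:ℂ) - W‖)^2 := by
    have h0 : (0:ℝ) ≤ ‖(X:ℂ) + W‖ + ‖(X:ℂ) - W‖ :=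
      add_nonneg (norm_nonneg _) (norm_nonneg _)
    nlinarith
  have hCA : C^2 ≤ (2 * ‖α‖ + 2 * ‖γ‖)^2 := by
    have h0 : (0:ℝ) ≤ 2 * ‖α‖ + 2 * ‖γ‖ :=
      by positivity
    nlinarith
  have hX : X = ‖α‖ - ‖γ‖ := rfl
  set p := ‖(X:ℂ) + W‖ with hp
  set q := ‖(X:ℂ) - W‖ with hq
  have hpq : (p+q)^2 ≤ 2*(2*X^2 + 2*‖δ‖^2) := by nlinarith [sq_nonneg (p-q), hpar]
  have hX2 : X^2 = (‖α‖ - ‖γ‖)^2 := by rw [hX]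
  nlinarith [hCA, hCB, hpq, hX2]

noncomputable def Fm (b : Fin 2 × Fin 2 × Fin 2 → ℂ) (i p j q k t : Fin 2) : ℝ :=
  Complex.normSq (b (i,j,k) * b (p,q,t) - b (i,q,t) * b (p,j,k)) +
  Complex.normSq (b (i,j,k) * b (p,q,t) - b (i,q,k) * b (p,j,t)) +
  Complex.normSq (b (i,j,k) * b (p,q,t) - b (i,j,t) * b (p,q,k))

lemma Fm_nonneg (b : Fin 2 × Fin 2 × Fin 2 → ℂ) (i p j q k t : Fin 2) : 0 ≤ Fm b i p j q k t := by
  unfold Fm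
  exact add_nonneg (add_nonneg (Complex.normSq_nonneg _) (Complex.normSq_nonneg _)) (Complex.normSq_nonneg _)

lemma red12_outer (b : Fin 2 × Fin 2 × Fin 2 → ℂ) :
    red12 (outer b) = outer (fun x => b (x.1, x.2, 0)) + outer (fun x => b (x.1, x.2, 1)) := by
  ext x y; simp [red12, outer, Fin.sum_univ_two]

lemma red13_outer (b : Fin 2 × Fin 2 × Fin 2 → ℂ) :
    red13 (outer b) = outer (fun x => b (x.1, 0, x.2)) + outer (fun x => b (x.1, 1, x.2)) := by
  ext x y; simp [red13, outer, Fin.sum_univ_two]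

lemma red23_outer (b : Fin 2 × Fin 2 × Fin 2 → ℂ) :
    red23 (outer b) = outer (fun x => b (0, x.1, x.2)) + outer (fun x => b (1, x.1, x.2)) := by
  ext x y; simp [red23, outer, Fin.sum_univ_two]

lemma subBound (b : Fin 2 × Fin 2 × Fin 2 → ℂ) :
    C2unnorm (red12 (outer b)) ^ 2 + C2unnorm (red13 (outer b)) ^ 2 +
      C2unnorm (red23 (outer b)) ^ 2 ≤
    (1/2) * ∑ i, ∑ p, ∑ j, ∑ q, ∑ k, ∑ t, Fm b i p j q k t := by
  have h12 := red12_outer b ▸ keyC2 (fun x => b (x.1, x.2, 0)) (fun x => b (x.1, x.2, 1))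
  have h13 := red13_outer b ▸ keyC2 (fun x => b (x.1, 0, x.2)) (fun x => b (x.1, 1, x.2))
  have h23 := red23_outer b ▸ keyC2 (fun x => b (0, x.1, x.2)) (fun x => b (1, x.1, x.2))
  refine (add_le_add (add_le_add h12 h13) h23).trans (le_of_eq ?_)
  simp only [qf, dl, Complex.sq_norm]
  apply Complex.ofReal_injective
  push_cast [Fm]
  simp only [← Complex.mul_conj]
  simp only [Fin.sum_univ_two, map_sub, map_add, map_mul]
  ring

lemma cnt1 {d : ℕ} (hd : 2 ≤ d) (f g : Fin d → Fin d → ℝ)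
    (hf0 : ∀ x y, 0 ≤ f x y) (hfg : ∀ x y, f x y ≤ g x y) :
    ∑ x₁, ∑ x₂, (if x₁ < x₂ then f x₁ x₁ + f x₁ x₂ + f x₂ x₁ + f x₂ x₂ else 0)
      ≤ ((d:ℝ) - 1) * ∑ x, ∑ y, g x y := by
  haveI : NeZero d := ⟨by omega⟩
  have step1 : ∑ x₁, ∑ x₂, (if x₁ < x₂ then f x₁ x₁ + f x₁ x₂ + f x₂ x₁ + f x₂ x₂ else 0)
      = (∑ x₁, ∑ x₂, (if x₁ < x₂ then f x₁ x₁ + f x₁ x₂ else 0))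
        + (∑ x₁, ∑ x₂, (if x₁ < x₂ then f x₂ x₂ + f x₂ x₁ else 0)) := by
    rw [← Finset.sum_add_distrib]
    refine Finset.sum_congr rfl fun x₁ _ => ?_
    rw [← Finset.sum_add_distrib]
    refine Finset.sum_congr rfl fun x₂ _ => ?_
    split_ifs <;> ring
  have step2 : (∑ x₁, ∑ x₂, (if x₁ < x₂ then f x₂ x₂ + f x₂ x₁ else 0))
      = ∑ x₁, ∑ x₂, (if x₂ < x₁ then f x₁ x₁ + f x₁ x₂ else 0) := Finset.sum_comm
  have step3 : ∑ x₁, ∑ x₂, (if x₁ < x₂ then f x₁ x₁ + f x₁ x₂ + f x₂ x₁ + f x₂ x₂ else 0)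
      = ∑ x₁, ∑ x₂, (if x₁ ≠ x₂ then f x₁ x₁ + f x₁ x₂ else 0) := by
    rw [step1, step2, ← Finset.sum_add_distrib]
    refine Finset.sum_congr rfl fun x₁ _ => ?_
    rw [← Finset.sum_add_distrib]
    refine Finset.sum_congr rfl fun x₂ _ => ?_
    rcases lt_trichotomy x₁ x₂ with h | h | h
    · rw [if_pos h, if_neg (asymm h), if_pos (ne_of_lt h), add_zero]
    · subst h; simp
    · rw [if_neg (asymm h), if_pos h, if_pos (Ne.symm (ne_of_lt h)), zero_add]
  rw [step3]
  have step4 : ∀ x₁ : Fin d, ∑ x₂, (if x₁ ≠ x₂ then f x₁ x₁ + f x₁ x₂ else 0)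
      = ((d:ℝ) - 2) * f x₁ x₁ + ∑ x₂, f x₁ x₂ := by
    intro x₁
    have : ∀ x₂ : Fin d, (if x₁ ≠ x₂ then f x₁ x₁ + f x₁ x₂ else 0)
        = (f x₁ x₁ + f x₁ x₂) - (if x₁ = x₂ then f x₁ x₁ + f x₁ x₂ else 0) := by
      intro x₂
      by_cases h : x₁ = x₂
      · simp [h]
      · simp [h]
    rw [Finset.sum_congr rfl fun x₂ _ => this x₂, Finset.sum_sub_distrib,
      Finset.sum_ite_eq Finset.univ x₁ (fun x₂ => f x₁ x₁ + f x₁ x₂)]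
    simp only [Finset.mem_univ, if_pos, Finset.sum_add_distrib, Finset.sum_const,
      Finset.card_univ, Fintype.card_fin, nsmul_eq_mul]
    push_cast
    ring
  rw [Finset.sum_congr rfl fun x₁ _ => step4 x₁, Finset.sum_add_distrib]
  have hdiag : ∑ x₁, f x₁ x₁ ≤ ∑ x₁, ∑ x₂, f x₁ x₂ :=
    Finset.sum_le_sum fun x₁ _ =>
      Finset.single_le_sum (fun x₂ _ => hf0 x₁ x₂) (Finset.mem_univ x₁)
  have hfg' : ∑ x₁, ∑ x₂, f x₁ x₂ ≤ ∑ x₁, ∑ x₂, g x₁ x₂ :=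
    Finset.sum_le_sum fun x₁ _ => Finset.sum_le_sum fun x₂ _ => hfg x₁ x₂
  have hd2 : (0:ℝ) ≤ (d:ℝ) - 2 := by
    have : (2:ℝ) ≤ (d:ℝ) := by exact_mod_cast hd
    linarith
  have h1 : ∑ x₁, ((d:ℝ) - 2) * f x₁ x₁ ≤ ((d:ℝ) - 2) * ∑ x₁, ∑ x₂, f x₁ x₂ := by
    rw [← Finset.mul_sum]
    exact mul_le_mul_of_nonneg_left hdiag hd2
  have h2 : (0:ℝ) ≤ ∑ x₁, ∑ x₂, f x₁ x₂ :=
    Finset.sum_nonneg fun x₁ _ => Finset.sum_nonneg fun x₂ _ => hf0 x₁ x₂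
  calc (∑ x₁, ((d:ℝ) - 2) * f x₁ x₁) + ∑ x₁, ∑ x₂, f x₁ x₂
      ≤ ((d:ℝ) - 2) * (∑ x₁, ∑ x₂, f x₁ x₂) + ∑ x₁, ∑ x₂, f x₁ x₂ := by linarith
    _ = ((d:ℝ) - 1) * ∑ x₁, ∑ x₂, f x₁ x₂ := by ring
    _ ≤ ((d:ℝ) - 1) * ∑ x, ∑ y, g x y := by
        apply mul_le_mul_of_nonneg_left hfg'
        have : (2:ℝ) ≤ (d:ℝ) := by exact_mod_cast hd
        linarith

/-- canonical six-fold sum -/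
noncomputable def S (F : Fin d1 → Fin d1 → Fin d2 → Fin d2 → Fin d3 → Fin d3 → ℂ) : ℂ :=
  ∑ i, ∑ p, ∑ j, ∑ q, ∑ k, ∑ t, F i p j q k t

lemma S_congr {F G : Fin d1 → Fin d1 → Fin d2 → Fin d2 → Fin d3 → Fin d3 → ℂ}
    (h : ∀ i p j q k t, F i p j q k t = G i p j q k t) : S F = S G := by
  unfold S
  exact scongr fun i => scongr fun p => scongr fun j => scongr fun q => scongr fun k =>
    scongr fun t => h i p j q k t

lemma S_add (F G : Fin d1 → Fin d1 → Fin d2 → Fin d2 → Fin d3 → Fin d3 → ℂ) :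
    S (fun i p j q k t => F i p j q k t + G i p j q k t) = S F + S G := by
  unfold S
  simp [Finset.sum_add_distrib]

lemma S_sub (F G : Fin d1 → Fin d1 → Fin d2 → Fin d2 → Fin d3 → Fin d3 → ℂ) :
    S (fun i p j q k t => F i p j q k t - G i p j q k t) = S F - S G := by
  unfold S
  simp [Finset.sum_sub_distrib]

lemma S_swap_jq (F : Fin d1 → Fin d1 → Fin d2 → Fin d2 → Fin d3 → Fin d3 → ℂ) :
    S (fun i p j q k t => F i p q j k t) = S F := by
  unfold S
  exact scongr fun i => scongr fun p => Finset.sum_comm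

lemma S_swap_kt (F : Fin d1 → Fin d1 → Fin d2 → Fin d2 → Fin d3 → Fin d3 → ℂ) :
    S (fun i p j q k t => F i p j q t k) = S F := by
  unfold S
  exact scongr fun i => scongr fun p => scongr fun j => scongr fun q => Finset.sum_comm

lemma S_swap_jqkt (F : Fin d1 → Fin d1 → Fin d2 → Fin d2 → Fin d3 → Fin d3 → ℂ) :
    S (fun i p j q k t => F i p q j t k) = S F := by
  rw [← S_swap_kt F]
  exact S_swap_jq _

variable (a : Fin d1 × Fin d2 × Fin d3 → ℂ)

lemma trE1 : tr1sq (outer a) =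
    S (fun i p j q k t => (a (i,j,k) * (starRingEnd ℂ) (a (p,j,k))) *
      (a (p,q,t) * (starRingEnd ℂ) (a (i,q,t)))) := by
  unfold tr1sq outer S
  simp only [Matrix.of_apply]
  refine scongr fun i => scongr fun p => ?_
  rw [Finset.sum_mul_sum]
  exact scongr fun j => scongr fun q => Finset.sum_mul_sum _ _ _ _

lemma trE23 : tr23sq (outer a) =
    S (fun i p j q k t => (a (i,j,k) * (starRingEnd ℂ) (a (i,q,t))) *
      (a (p,q,t) * (starRingEnd ℂ) (a (p,j,k)))) := by
  unfold tr23sq outer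
  simp only [Matrix.of_apply]
  have h1 : ∀ (j q : Fin d2) (k t : Fin d3),
      (∑ i, a (i,j,k) * (starRingEnd ℂ) (a (i,q,t))) *
        (∑ i, a (i,q,t) * (starRingEnd ℂ) (a (i,j,k)))
      = ∑ i, ∑ p, (a (i,j,k) * (starRingEnd ℂ) (a (i,q,t))) *
        (a (p,q,t) * (starRingEnd ℂ) (a (p,j,k))) := fun j q k t => Finset.sum_mul_sum _ _ _ _
  rw [scongr fun j => scongr fun q => scongr fun k => scongr fun t => h1 j q k t]
  rw [sc6 (fun (j q : Fin d2) (k t : Fin d3) (i p : Fin d1) =>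
    (a (i,j,k) * (starRingEnd ℂ) (a (i,q,t))) * (a (p,q,t) * (starRingEnd ℂ) (a (p,j,k))))]
  rw [sc6 (fun (p : Fin d1) (j q : Fin d2) (k t : Fin d3) (i : Fin d1) =>
    (a (i,j,k) * (starRingEnd ℂ) (a (i,q,t))) * (a (p,q,t) * (starRingEnd ℂ) (a (p,j,k))))]
  rfl

lemma trE2 : tr2sq (outer a) =
    S (fun i p j q k t => (a (i,j,k) * (starRingEnd ℂ) (a (i,q,k))) *
      (a (p,q,t) * (starRingEnd ℂ) (a (p,j,t)))) := by
  unfold tr2sq outer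
  simp only [Matrix.of_apply]
  have h1 : ∀ (j q : Fin d2),
      (∑ i, ∑ k, a (i,j,k) * (starRingEnd ℂ) (a (i,q,k))) *
        (∑ i, ∑ k, a (i,q,k) * (starRingEnd ℂ) (a (i,j,k)))
      = ∑ i, ∑ p, ∑ k, ∑ t, (a (i,j,k) * (starRingEnd ℂ) (a (i,q,k))) *
        (a (p,q,t) * (starRingEnd ℂ) (a (p,j,t))) := by
    intro j q
    rw [Finset.sum_mul_sum]
    exact scongr fun i => scongr fun p => Finset.sum_mul_sum _ _ _ _
  rw [scongr fun j => scongr fun q => h1 j q]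
  rw [sc3 (fun (j q : Fin d2) (i : Fin d1) => ∑ p, ∑ k, ∑ t,
    (a (i,j,k) * (starRingEnd ℂ) (a (i,q,k))) * (a (p,q,t) * (starRingEnd ℂ) (a (p,j,t))))]
  refine scongr fun i => ?_
  rw [sc3 (fun (j q : Fin d2) (p : Fin d1) => ∑ k, ∑ t,
    (a (i,j,k) * (starRingEnd ℂ) (a (i,q,k))) * (a (p,q,t) * (starRingEnd ℂ) (a (p,j,t))))]

lemma trE13 : tr13sq (outer a) =
    S (fun i p j q k t => (a (i,j,k) * (starRingEnd ℂ) (a (p,j,t))) *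
      (a (p,q,t) * (starRingEnd ℂ) (a (i,q,k)))) := by
  unfold tr13sq outer
  simp only [Matrix.of_apply]
  refine scongr fun i => scongr fun p => ?_
  have h1 : ∀ (k t : Fin d3),
      (∑ j, a (i,j,k) * (starRingEnd ℂ) (a (p,j,t))) *
        (∑ j, a (p,j,t) * (starRingEnd ℂ) (a (i,j,k)))
      = ∑ j, ∑ q, (a (i,j,k) * (starRingEnd ℂ) (a (p,j,t))) *
        (a (p,q,t) * (starRingEnd ℂ) (a (i,q,k))) := fun k t => Finset.sum_mul_sum _ _ _ _
  rw [scongr fun k => scongr fun t => h1 k t]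
  rw [sc4 (fun (k t : Fin d3) (j q : Fin d2) =>
    (a (i,j,k) * (starRingEnd ℂ) (a (p,j,t))) * (a (p,q,t) * (starRingEnd ℂ) (a (i,q,k))))]
  rw [sc4 (fun (q : Fin d2) (k t : Fin d3) (j : Fin d2) =>
    (a (i,j,k) * (starRingEnd ℂ) (a (p,j,t))) * (a (p,q,t) * (starRingEnd ℂ) (a (i,q,k))))]

lemma trE3 : tr3sq (outer a) =
    S (fun i p j q k t => (a (i,j,k) * (starRingEnd ℂ) (a (i,j,t))) *
      (a (p,q,t) * (starRingEnd ℂ) (a (p,q,k)))) := by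
  unfold tr3sq outer
  simp only [Matrix.of_apply]
  have h1 : ∀ (k t : Fin d3),
      (∑ i, ∑ j, a (i,j,k) * (starRingEnd ℂ) (a (i,j,t))) *
        (∑ i, ∑ j, a (i,j,t) * (starRingEnd ℂ) (a (i,j,k)))
      = ∑ i, ∑ p, ∑ j, ∑ q, (a (i,j,k) * (starRingEnd ℂ) (a (i,j,t))) *
        (a (p,q,t) * (starRingEnd ℂ) (a (p,q,k))) := by
    intro k t
    rw [Finset.sum_mul_sum]
    exact scongr fun i => scongr fun p => Finset.sum_mul_sum _ _ _ _
  rw [scongr fun k => scongr fun t => h1 k t]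
  rw [sc6 (fun (k t : Fin d3) (i p : Fin d1) (j q : Fin d2) =>
    (a (i,j,k) * (starRingEnd ℂ) (a (i,j,t))) * (a (p,q,t) * (starRingEnd ℂ) (a (p,q,k))))]
  rw [sc6 (fun (q : Fin d2) (k t : Fin d3) (i p : Fin d1) (j : Fin d2) =>
    (a (i,j,k) * (starRingEnd ℂ) (a (i,j,t))) * (a (p,q,t) * (starRingEnd ℂ) (a (p,q,k))))]
  rw [sc6 (fun (j q : Fin d2) (k t : Fin d3) (i p : Fin d1) =>
    (a (i,j,k) * (starRingEnd ℂ) (a (i,j,t))) * (a (p,q,t) * (starRingEnd ℂ) (a (p,q,k))))]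
  rw [sc6 (fun (p : Fin d1) (j q : Fin d2) (k t : Fin d3) (i : Fin d1) =>
    (a (i,j,k) * (starRingEnd ℂ) (a (i,j,t))) * (a (p,q,t) * (starRingEnd ℂ) (a (p,q,k))))]
  rfl

lemma trE12 : tr12sq (outer a) =
    S (fun i p j q k t => (a (i,j,k) * (starRingEnd ℂ) (a (p,q,k))) *
      (a (p,q,t) * (starRingEnd ℂ) (a (i,j,t)))) := by
  unfold tr12sq outer S
  simp only [Matrix.of_apply]
  exact scongr fun i => scongr fun p => scongr fun j => scongr fun q =>
    Finset.sum_mul_sum _ _ _ _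

lemma NcE : (∑ x, a x * (starRingEnd ℂ) (a x)) ^ 2 =
    S (fun i p j q k t => (a (i,j,k) * (starRingEnd ℂ) (a (i,j,k))) *
      (a (p,q,t) * (starRingEnd ℂ) (a (p,q,t)))) := by
  have hNf : (∑ x, a x * (starRingEnd ℂ) (a x))
      = ∑ i, ∑ j, ∑ k, a (i,j,k) * (starRingEnd ℂ) (a (i,j,k)) := by
    rw [Fintype.sum_prod_type]
    exact scongr fun i => Fintype.sum_prod_type _
  rw [pow_two, hNf, Finset.sum_mul_sum]
  unfold S
  refine scongr fun i => scongr fun p => ?_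
  rw [Finset.sum_mul_sum]
  exact scongr fun j => scongr fun q => Finset.sum_mul_sum _ _ _ _

lemma L1 : tr1sq (outer a) + tr23sq (outer a) +
    S (fun i p j q k t => ((a (i,j,k) * a (p,q,t)) - (a (i,q,t) * a (p,j,k))) * (starRingEnd ℂ) ((a (i,j,k) * a (p,q,t)) - (a (i,q,t) * a (p,j,k)))) = 2 * (∑ x, a x * (starRingEnd ℂ) (a x)) ^ 2 := by
  rw [trE1, trE23, NcE]
  have split : S (fun i p j q k t => ((a (i,j,k) * a (p,q,t)) - (a (i,q,t) * a (p,j,k))) * (starRingEnd ℂ) ((a (i,j,k) * a (p,q,t)) - (a (i,q,t) * a (p,j,k)))) =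
      S (fun i p j q k t => (a (i,j,k) * a (p,q,t)) * (starRingEnd ℂ) (a (i,j,k) * a (p,q,t))) - S (fun i p j q k t => (a (i,j,k) * a (p,q,t)) * (starRingEnd ℂ) (a (i,q,t) * a (p,j,k))) - S (fun i p j q k t => (a (i,q,t) * a (p,j,k)) * (starRingEnd ℂ) (a (i,j,k) * a (p,q,t))) + S (fun i p j q k t => (a (i,q,t) * a (p,j,k)) * (starRingEnd ℂ) (a (i,q,t) * a (p,j,k))) := by
    have e0 : S (fun i p j q k t => ((a (i,j,k) * a (p,q,t)) - (a (i,q,t) * a (p,j,k))) * (starRingEnd ℂ) ((a (i,j,k) * a (p,q,t)) - (a (i,q,t) * a (p,j,k)))) =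
        S (fun i p j q k t => (((a (i,j,k) * a (p,q,t)) * (starRingEnd ℂ) (a (i,j,k) * a (p,q,t))) - ((a (i,j,k) * a (p,q,t)) * (starRingEnd ℂ) (a (i,q,t) * a (p,j,k)))) - (((a (i,q,t) * a (p,j,k)) * (starRingEnd ℂ) (a (i,j,k) * a (p,q,t))) - ((a (i,q,t) * a (p,j,k)) * (starRingEnd ℂ) (a (i,q,t) * a (p,j,k))))) :=
      S_congr fun i p j q k t => by simp only [map_sub]; ring
    rw [e0, S_sub (fun i p j q k t => ((a (i,j,k) * a (p,q,t)) * (starRingEnd ℂ) (a (i,j,k) * a (p,q,t))) - ((a (i,j,k) * a (p,q,t)) * (starRingEnd ℂ) (a (i,q,t) * a (p,j,k)))) (fun i p j q k t => ((a (i,q,t) * a (p,j,k)) * (starRingEnd ℂ) (a (i,j,k) * a (p,q,t))) - ((a (i,q,t) * a (p,j,k)) * (starRingEnd ℂ) (a (i,q,t) * a (p,j,k)))),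
      S_sub (fun i p j q k t => (a (i,j,k) * a (p,q,t)) * (starRingEnd ℂ) (a (i,j,k) * a (p,q,t))) (fun i p j q k t => (a (i,j,k) * a (p,q,t)) * (starRingEnd ℂ) (a (i,q,t) * a (p,j,k))), S_sub (fun i p j q k t => (a (i,q,t) * a (p,j,k)) * (starRingEnd ℂ) (a (i,j,k) * a (p,q,t))) (fun i p j q k t => (a (i,q,t) * a (p,j,k)) * (starRingEnd ℂ) (a (i,q,t) * a (p,j,k)))]
    ring
  have hMA : S (fun i p j q k t => (a (i,j,k) * (starRingEnd ℂ) (a (p,j,k))) * (a (p,q,t) * (starRingEnd ℂ) (a (i,q,t)))) = S (fun i p j q k t => (a (i,j,k) * a (p,q,t)) * (starRingEnd ℂ) (a (i,q,t) * a (p,j,k))) := S_congr fun i p j q k t => by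
    simp only [map_mul]; ring
  have hMB : S (fun i p j q k t => (a (i,j,k) * (starRingEnd ℂ) (a (i,q,t))) * (a (p,q,t) * (starRingEnd ℂ) (a (p,j,k)))) = S (fun i p j q k t => (a (i,j,k) * a (p,q,t)) * (starRingEnd ℂ) (a (i,q,t) * a (p,j,k))) := S_congr fun i p j q k t => by
    simp only [map_mul]; ring
  have hswap : S (fun i p j q k t => (a (i,q,t) * a (p,j,k)) * (starRingEnd ℂ) (a (i,j,k) * a (p,q,t))) = S (fun i p j q k t => (a (i,j,k) * a (p,q,t)) * (starRingEnd ℂ) (a (i,q,t) * a (p,j,k))) := by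
    calc S (fun i p j q k t => (a (i,q,t) * a (p,j,k)) * (starRingEnd ℂ) (a (i,j,k) * a (p,q,t))) = S (fun i p j q k t => ((fun i p j q k t => (a (i,j,k) * a (p,q,t)) * (starRingEnd ℂ) (a (i,q,t) * a (p,j,k))) i p q j t k))
        := S_congr fun i p j q k t => rfl
      _ = S (fun i p j q k t => (a (i,j,k) * a (p,q,t)) * (starRingEnd ℂ) (a (i,q,t) * a (p,j,k))) := S_swap_jqkt _
  have hG : S (fun i p j q k t => (a (i,j,k) * a (p,q,t)) * (starRingEnd ℂ) (a (i,j,k) * a (p,q,t))) = S (fun i p j q k t => (a (i,j,k) * (starRingEnd ℂ) (a (i,j,k))) * (a (p,q,t) * (starRingEnd ℂ) (a (p,q,t)))) := S_congr fun i p j q k t => by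
    simp only [map_mul]; ring
  have hD : S (fun i p j q k t => (a (i,q,t) * a (p,j,k)) * (starRingEnd ℂ) (a (i,q,t) * a (p,j,k))) = S (fun i p j q k t => (a (i,j,k) * (starRingEnd ℂ) (a (i,j,k))) * (a (p,q,t) * (starRingEnd ℂ) (a (p,q,t)))) := by
    calc S (fun i p j q k t => (a (i,q,t) * a (p,j,k)) * (starRingEnd ℂ) (a (i,q,t) * a (p,j,k))) = S (fun i p j q k t => ((fun i p j q k t => (a (i,j,k) * (starRingEnd ℂ) (a (i,j,k))) * (a (p,q,t) * (starRingEnd ℂ) (a (p,q,t)))) i p q j t k))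
        := S_congr fun i p j q k t => by simp only [map_mul]; ring
      _ = S (fun i p j q k t => (a (i,j,k) * (starRingEnd ℂ) (a (i,j,k))) * (a (p,q,t) * (starRingEnd ℂ) (a (p,q,t)))) := S_swap_jqkt _
  linear_combination hMA + hMB + split + hG + hD - hswap

lemma L2 : tr2sq (outer a) + tr13sq (outer a) +
    S (fun i p j q k t => ((a (i,j,k) * a (p,q,t)) - (a (i,q,k) * a (p,j,t))) * (starRingEnd ℂ) ((a (i,j,k) * a (p,q,t)) - (a (i,q,k) * a (p,j,t)))) = 2 * (∑ x, a x * (starRingEnd ℂ) (a x)) ^ 2 := by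
  rw [trE2, trE13, NcE]
  have split : S (fun i p j q k t => ((a (i,j,k) * a (p,q,t)) - (a (i,q,k) * a (p,j,t))) * (starRingEnd ℂ) ((a (i,j,k) * a (p,q,t)) - (a (i,q,k) * a (p,j,t)))) =
      S (fun i p j q k t => (a (i,j,k) * a (p,q,t)) * (starRingEnd ℂ) (a (i,j,k) * a (p,q,t))) - S (fun i p j q k t => (a (i,j,k) * a (p,q,t)) * (starRingEnd ℂ) (a (i,q,k) * a (p,j,t))) - S (fun i p j q k t => (a (i,q,k) * a (p,j,t)) * (starRingEnd ℂ) (a (i,j,k) * a (p,q,t))) + S (fun i p j q k t => (a (i,q,k) * a (p,j,t)) * (starRingEnd ℂ) (a (i,q,k) * a (p,j,t))) := by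
    have e0 : S (fun i p j q k t => ((a (i,j,k) * a (p,q,t)) - (a (i,q,k) * a (p,j,t))) * (starRingEnd ℂ) ((a (i,j,k) * a (p,q,t)) - (a (i,q,k) * a (p,j,t)))) =
        S (fun i p j q k t => (((a (i,j,k) * a (p,q,t)) * (starRingEnd ℂ) (a (i,j,k) * a (p,q,t))) - ((a (i,j,k) * a (p,q,t)) * (starRingEnd ℂ) (a (i,q,k) * a (p,j,t)))) - (((a (i,q,k) * a (p,j,t)) * (starRingEnd ℂ) (a (i,j,k) * a (p,q,t))) - ((a (i,q,k) * a (p,j,t)) * (starRingEnd ℂ) (a (i,q,k) * a (p,j,t))))) :=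
      S_congr fun i p j q k t => by simp only [map_sub]; ring
    rw [e0, S_sub (fun i p j q k t => ((a (i,j,k) * a (p,q,t)) * (starRingEnd ℂ) (a (i,j,k) * a (p,q,t))) - ((a (i,j,k) * a (p,q,t)) * (starRingEnd ℂ) (a (i,q,k) * a (p,j,t)))) (fun i p j q k t => ((a (i,q,k) * a (p,j,t)) * (starRingEnd ℂ) (a (i,j,k) * a (p,q,t))) - ((a (i,q,k) * a (p,j,t)) * (starRingEnd ℂ) (a (i,q,k) * a (p,j,t)))),
      S_sub (fun i p j q k t => (a (i,j,k) * a (p,q,t)) * (starRingEnd ℂ) (a (i,j,k) * a (p,q,t))) (fun i p j q k t => (a (i,j,k) * a (p,q,t)) * (starRingEnd ℂ) (a (i,q,k) * a (p,j,t))), S_sub (fun i p j q k t => (a (i,q,k) * a (p,j,t)) * (starRingEnd ℂ) (a (i,j,k) * a (p,q,t))) (fun i p j q k t => (a (i,q,k) * a (p,j,t)) * (starRingEnd ℂ) (a (i,q,k) * a (p,j,t)))]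
    ring
  have hMA : S (fun i p j q k t => (a (i,j,k) * (starRingEnd ℂ) (a (i,q,k))) * (a (p,q,t) * (starRingEnd ℂ) (a (p,j,t)))) = S (fun i p j q k t => (a (i,j,k) * a (p,q,t)) * (starRingEnd ℂ) (a (i,q,k) * a (p,j,t))) := S_congr fun i p j q k t => by
    simp only [map_mul]; ring
  have hMB : S (fun i p j q k t => (a (i,j,k) * (starRingEnd ℂ) (a (p,j,t))) * (a (p,q,t) * (starRingEnd ℂ) (a (i,q,k)))) = S (fun i p j q k t => (a (i,j,k) * a (p,q,t)) * (starRingEnd ℂ) (a (i,q,k) * a (p,j,t))) := S_congr fun i p j q k t => by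
    simp only [map_mul]; ring
  have hswap : S (fun i p j q k t => (a (i,q,k) * a (p,j,t)) * (starRingEnd ℂ) (a (i,j,k) * a (p,q,t))) = S (fun i p j q k t => (a (i,j,k) * a (p,q,t)) * (starRingEnd ℂ) (a (i,q,k) * a (p,j,t))) := by
    calc S (fun i p j q k t => (a (i,q,k) * a (p,j,t)) * (starRingEnd ℂ) (a (i,j,k) * a (p,q,t))) = S (fun i p j q k t => ((fun i p j q k t => (a (i,j,k) * a (p,q,t)) * (starRingEnd ℂ) (a (i,q,k) * a (p,j,t))) i p q j k t))
        := S_congr fun i p j q k t => rfl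
      _ = S (fun i p j q k t => (a (i,j,k) * a (p,q,t)) * (starRingEnd ℂ) (a (i,q,k) * a (p,j,t))) := S_swap_jq _
  have hG : S (fun i p j q k t => (a (i,j,k) * a (p,q,t)) * (starRingEnd ℂ) (a (i,j,k) * a (p,q,t))) = S (fun i p j q k t => (a (i,j,k) * (starRingEnd ℂ) (a (i,j,k))) * (a (p,q,t) * (starRingEnd ℂ) (a (p,q,t)))) := S_congr fun i p j q k t => by
    simp only [map_mul]; ring
  have hD : S (fun i p j q k t => (a (i,q,k) * a (p,j,t)) * (starRingEnd ℂ) (a (i,q,k) * a (p,j,t))) = S (fun i p j q k t => (a (i,j,k) * (starRingEnd ℂ) (a (i,j,k))) * (a (p,q,t) * (starRingEnd ℂ) (a (p,q,t)))) := by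
    calc S (fun i p j q k t => (a (i,q,k) * a (p,j,t)) * (starRingEnd ℂ) (a (i,q,k) * a (p,j,t))) = S (fun i p j q k t => ((fun i p j q k t => (a (i,j,k) * (starRingEnd ℂ) (a (i,j,k))) * (a (p,q,t) * (starRingEnd ℂ) (a (p,q,t)))) i p q j k t))
        := S_congr fun i p j q k t => by simp only [map_mul]; ring
      _ = S (fun i p j q k t => (a (i,j,k) * (starRingEnd ℂ) (a (i,j,k))) * (a (p,q,t) * (starRingEnd ℂ) (a (p,q,t)))) := S_swap_jq _
  linear_combination hMA + hMB + split + hG + hD - hswap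

lemma L3 : tr3sq (outer a) + tr12sq (outer a) +
    S (fun i p j q k t => ((a (i,j,k) * a (p,q,t)) - (a (i,j,t) * a (p,q,k))) * (starRingEnd ℂ) ((a (i,j,k) * a (p,q,t)) - (a (i,j,t) * a (p,q,k)))) = 2 * (∑ x, a x * (starRingEnd ℂ) (a x)) ^ 2 := by
  rw [trE3, trE12, NcE]
  have split : S (fun i p j q k t => ((a (i,j,k) * a (p,q,t)) - (a (i,j,t) * a (p,q,k))) * (starRingEnd ℂ) ((a (i,j,k) * a (p,q,t)) - (a (i,j,t) * a (p,q,k)))) =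
      S (fun i p j q k t => (a (i,j,k) * a (p,q,t)) * (starRingEnd ℂ) (a (i,j,k) * a (p,q,t))) - S (fun i p j q k t => (a (i,j,k) * a (p,q,t)) * (starRingEnd ℂ) (a (i,j,t) * a (p,q,k))) - S (fun i p j q k t => (a (i,j,t) * a (p,q,k)) * (starRingEnd ℂ) (a (i,j,k) * a (p,q,t))) + S (fun i p j q k t => (a (i,j,t) * a (p,q,k)) * (starRingEnd ℂ) (a (i,j,t) * a (p,q,k))) := by
    have e0 : S (fun i p j q k t => ((a (i,j,k) * a (p,q,t)) - (a (i,j,t) * a (p,q,k))) * (starRingEnd ℂ) ((a (i,j,k) * a (p,q,t)) - (a (i,j,t) * a (p,q,k)))) =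
        S (fun i p j q k t => (((a (i,j,k) * a (p,q,t)) * (starRingEnd ℂ) (a (i,j,k) * a (p,q,t))) - ((a (i,j,k) * a (p,q,t)) * (starRingEnd ℂ) (a (i,j,t) * a (p,q,k)))) - (((a (i,j,t) * a (p,q,k)) * (starRingEnd ℂ) (a (i,j,k) * a (p,q,t))) - ((a (i,j,t) * a (p,q,k)) * (starRingEnd ℂ) (a (i,j,t) * a (p,q,k))))) :=
      S_congr fun i p j q k t => by simp only [map_sub]; ring
    rw [e0, S_sub (fun i p j q k t => ((a (i,j,k) * a (p,q,t)) * (starRingEnd ℂ) (a (i,j,k) * a (p,q,t))) - ((a (i,j,k) * a (p,q,t)) * (starRingEnd ℂ) (a (i,j,t) * a (p,q,k)))) (fun i p j q k t => ((a (i,j,t) * a (p,q,k)) * (starRingEnd ℂ) (a (i,j,k) * a (p,q,t))) - ((a (i,j,t) * a (p,q,k)) * (starRingEnd ℂ) (a (i,j,t) * a (p,q,k)))),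
      S_sub (fun i p j q k t => (a (i,j,k) * a (p,q,t)) * (starRingEnd ℂ) (a (i,j,k) * a (p,q,t))) (fun i p j q k t => (a (i,j,k) * a (p,q,t)) * (starRingEnd ℂ) (a (i,j,t) * a (p,q,k))), S_sub (fun i p j q k t => (a (i,j,t) * a (p,q,k)) * (starRingEnd ℂ) (a (i,j,k) * a (p,q,t))) (fun i p j q k t => (a (i,j,t) * a (p,q,k)) * (starRingEnd ℂ) (a (i,j,t) * a (p,q,k)))]
    ring
  have hMA : S (fun i p j q k t => (a (i,j,k) * (starRingEnd ℂ) (a (i,j,t))) * (a (p,q,t) * (starRingEnd ℂ) (a (p,q,k)))) = S (fun i p j q k t => (a (i,j,k) * a (p,q,t)) * (starRingEnd ℂ) (a (i,j,t) * a (p,q,k))) := S_congr fun i p j q k t => by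
    simp only [map_mul]; ring
  have hMB : S (fun i p j q k t => (a (i,j,k) * (starRingEnd ℂ) (a (p,q,k))) * (a (p,q,t) * (starRingEnd ℂ) (a (i,j,t)))) = S (fun i p j q k t => (a (i,j,k) * a (p,q,t)) * (starRingEnd ℂ) (a (i,j,t) * a (p,q,k))) := S_congr fun i p j q k t => by
    simp only [map_mul]; ring
  have hswap : S (fun i p j q k t => (a (i,j,t) * a (p,q,k)) * (starRingEnd ℂ) (a (i,j,k) * a (p,q,t))) = S (fun i p j q k t => (a (i,j,k) * a (p,q,t)) * (starRingEnd ℂ) (a (i,j,t) * a (p,q,k))) := by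
    calc S (fun i p j q k t => (a (i,j,t) * a (p,q,k)) * (starRingEnd ℂ) (a (i,j,k) * a (p,q,t))) = S (fun i p j q k t => ((fun i p j q k t => (a (i,j,k) * a (p,q,t)) * (starRingEnd ℂ) (a (i,j,t) * a (p,q,k))) i p j q t k))
        := S_congr fun i p j q k t => rfl
      _ = S (fun i p j q k t => (a (i,j,k) * a (p,q,t)) * (starRingEnd ℂ) (a (i,j,t) * a (p,q,k))) := S_swap_kt _
  have hG : S (fun i p j q k t => (a (i,j,k) * a (p,q,t)) * (starRingEnd ℂ) (a (i,j,k) * a (p,q,t))) = S (fun i p j q k t => (a (i,j,k) * (starRingEnd ℂ) (a (i,j,k))) * (a (p,q,t) * (starRingEnd ℂ) (a (p,q,t)))) := S_congr fun i p j q k t => by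
    simp only [map_mul]; ring
  have hD : S (fun i p j q k t => (a (i,j,t) * a (p,q,k)) * (starRingEnd ℂ) (a (i,j,t) * a (p,q,k))) = S (fun i p j q k t => (a (i,j,k) * (starRingEnd ℂ) (a (i,j,k))) * (a (p,q,t) * (starRingEnd ℂ) (a (p,q,t)))) := by
    calc S (fun i p j q k t => (a (i,j,t) * a (p,q,k)) * (starRingEnd ℂ) (a (i,j,t) * a (p,q,k))) = S (fun i p j q k t => ((fun i p j q k t => (a (i,j,k) * (starRingEnd ℂ) (a (i,j,k))) * (a (p,q,t) * (starRingEnd ℂ) (a (p,q,t)))) i p j q t k))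
        := S_congr fun i p j q k t => by simp only [map_mul]; ring
      _ = S (fun i p j q k t => (a (i,j,k) * (starRingEnd ℂ) (a (i,j,k))) * (a (p,q,t) * (starRingEnd ℂ) (a (p,q,t)))) := S_swap_kt _
  linear_combination hMA + hMB + split + hG + hD - hswap


lemma esum2 {X : Type*} (x₁ x₂ : X) (h : X → X → ℝ) :
    (∑ e : Fin 2, ∑ e' : Fin 2, h (if e = 0 then x₁ else x₂) (if e' = 0 then x₁ else x₂))
      = h x₁ x₁ + h x₁ x₂ + h x₂ x₁ + h x₂ x₂ := by
  simp [Fin.sum_univ_two]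
  ring

lemma lvl2eq {d2 d3 : ℕ} (W : Fin d2 → Fin d2 → Fin d3 → Fin d3 → ℝ) :
    (∑ j₁, ∑ j₂, ∑ k₁, ∑ k₂, if j₁ < j₂ ∧ k₁ < k₂ then
        ∑ e₃ : Fin 2, ∑ e₄ : Fin 2, ∑ e₅ : Fin 2, ∑ e₆ : Fin 2,
          W (if e₃ = 0 then j₁ else j₂) (if e₄ = 0 then j₁ else j₂)
            (if e₅ = 0 then k₁ else k₂) (if e₆ = 0 then k₁ else k₂) else 0)
    = ∑ j₁, ∑ j₂, (if j₁ < j₂ then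
        ∑ e₃ : Fin 2, ∑ e₄ : Fin 2, ∑ k₁, ∑ k₂, (if k₁ < k₂ then
          ∑ e₅ : Fin 2, ∑ e₆ : Fin 2,
            W (if e₃ = 0 then j₁ else j₂) (if e₄ = 0 then j₁ else j₂)
              (if e₅ = 0 then k₁ else k₂) (if e₆ = 0 then k₁ else k₂) else 0) else 0) := by
  refine scongr fun j₁ => scongr fun j₂ => ?_
  by_cases hB : j₁ < j₂
  · simp only [hB, true_and, if_pos]
    rw [show (∑ k₁, ∑ k₂, if k₁ < k₂ then
          ∑ e₃ : Fin 2, ∑ e₄ : Fin 2, ∑ e₅ : Fin 2, ∑ e₆ : Fin 2,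
            W (if e₃ = 0 then j₁ else j₂) (if e₄ = 0 then j₁ else j₂)
              (if e₅ = 0 then k₁ else k₂) (if e₆ = 0 then k₁ else k₂) else 0)
        = ∑ k₁, ∑ k₂, ∑ e₃ : Fin 2, ∑ e₄ : Fin 2, (if k₁ < k₂ then
            ∑ e₅ : Fin 2, ∑ e₆ : Fin 2,
              W (if e₃ = 0 then j₁ else j₂) (if e₄ = 0 then j₁ else j₂)
                (if e₅ = 0 then k₁ else k₂) (if e₆ = 0 then k₁ else k₂) else 0) from
      scongr fun k₁ => scongr fun k₂ => by rw [ite_sum]; exact scongr fun e₃ => ite_sum _ _]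
    rw [sc4 (fun (k₁ k₂ : Fin d3) (e₃ e₄ : Fin 2) => (if k₁ < k₂ then
            ∑ e₅ : Fin 2, ∑ e₆ : Fin 2,
              W (if e₃ = 0 then j₁ else j₂) (if e₄ = 0 then j₁ else j₂)
                (if e₅ = 0 then k₁ else k₂) (if e₆ = 0 then k₁ else k₂) else 0))]
    rw [sc4 (fun (e₄ : Fin 2) (k₁ k₂ : Fin d3) (e₃ : Fin 2) => (if k₁ < k₂ then
            ∑ e₅ : Fin 2, ∑ e₆ : Fin 2,
              W (if e₃ = 0 then j₁ else j₂) (if e₄ = 0 then j₁ else j₂)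
                (if e₅ = 0 then k₁ else k₂) (if e₆ = 0 then k₁ else k₂) else 0))]
  · simp [hB]

lemma lvl1eq {d1 d2 d3 : ℕ}
    (H : Fin d1 → Fin d1 → Fin d2 → Fin d2 → Fin d3 → Fin d3 → ℝ) :
    (∑ i₁, ∑ i₂, ∑ j₁, ∑ j₂, ∑ k₁, ∑ k₂, if i₁ < i₂ ∧ j₁ < j₂ ∧ k₁ < k₂ then
        ∑ e₁ : Fin 2, ∑ e₂ : Fin 2, ∑ e₃ : Fin 2, ∑ e₄ : Fin 2, ∑ e₅ : Fin 2, ∑ e₆ : Fin 2,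
          H (if e₁ = 0 then i₁ else i₂) (if e₂ = 0 then i₁ else i₂)
            (if e₃ = 0 then j₁ else j₂) (if e₄ = 0 then j₁ else j₂)
            (if e₅ = 0 then k₁ else k₂) (if e₆ = 0 then k₁ else k₂) else 0)
    = ∑ i₁, ∑ i₂, (if i₁ < i₂ then ∑ e₁ : Fin 2, ∑ e₂ : Fin 2,
        ∑ j₁, ∑ j₂, (if j₁ < j₂ then ∑ e₃ : Fin 2, ∑ e₄ : Fin 2,
          ∑ k₁, ∑ k₂, (if k₁ < k₂ then ∑ e₅ : Fin 2, ∑ e₆ : Fin 2,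
            H (if e₁ = 0 then i₁ else i₂) (if e₂ = 0 then i₁ else i₂)
              (if e₃ = 0 then j₁ else j₂) (if e₄ = 0 then j₁ else j₂)
              (if e₅ = 0 then k₁ else k₂) (if e₆ = 0 then k₁ else k₂) else 0) else 0) else 0) := by
  refine scongr fun i₁ => scongr fun i₂ => ?_
  by_cases hA : i₁ < i₂
  · simp only [hA, true_and, if_pos]
    rw [show (∑ j₁, ∑ j₂, ∑ k₁, ∑ k₂, if j₁ < j₂ ∧ k₁ < k₂ then
          ∑ e₁ : Fin 2, ∑ e₂ : Fin 2, ∑ e₃ : Fin 2, ∑ e₄ : Fin 2, ∑ e₅ : Fin 2, ∑ e₆ : Fin 2,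
            H (if e₁ = 0 then i₁ else i₂) (if e₂ = 0 then i₁ else i₂)
              (if e₃ = 0 then j₁ else j₂) (if e₄ = 0 then j₁ else j₂)
              (if e₅ = 0 then k₁ else k₂) (if e₆ = 0 then k₁ else k₂) else 0)
        = ∑ j₁, ∑ j₂, ∑ k₁, ∑ k₂, ∑ e₁ : Fin 2, ∑ e₂ : Fin 2, (if j₁ < j₂ ∧ k₁ < k₂ then
          ∑ e₃ : Fin 2, ∑ e₄ : Fin 2, ∑ e₅ : Fin 2, ∑ e₆ : Fin 2,
            H (if e₁ = 0 then i₁ else i₂) (if e₂ = 0 then i₁ else i₂)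
              (if e₃ = 0 then j₁ else j₂) (if e₄ = 0 then j₁ else j₂)
              (if e₅ = 0 then k₁ else k₂) (if e₆ = 0 then k₁ else k₂) else 0) from
      scongr fun j₁ => scongr fun j₂ => scongr fun k₁ => scongr fun k₂ => by
        rw [ite_sum]; exact scongr fun e₁ => ite_sum _ _]
    rw [sc6 (fun (j₁ j₂ : Fin d2) (k₁ k₂ : Fin d3) (e₁ e₂ : Fin 2) => (if j₁ < j₂ ∧ k₁ < k₂ then
          ∑ e₃ : Fin 2, ∑ e₄ : Fin 2, ∑ e₅ : Fin 2, ∑ e₆ : Fin 2,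
            H (if e₁ = 0 then i₁ else i₂) (if e₂ = 0 then i₁ else i₂)
              (if e₃ = 0 then j₁ else j₂) (if e₄ = 0 then j₁ else j₂)
              (if e₅ = 0 then k₁ else k₂) (if e₆ = 0 then k₁ else k₂) else 0))]
    rw [sc6 (fun (e₂ : Fin 2) (j₁ j₂ : Fin d2) (k₁ k₂ : Fin d3) (e₁ : Fin 2) => (if j₁ < j₂ ∧ k₁ < k₂ then
          ∑ e₃ : Fin 2, ∑ e₄ : Fin 2, ∑ e₅ : Fin 2, ∑ e₆ : Fin 2,
            H (if e₁ = 0 then i₁ else i₂) (if e₂ = 0 then i₁ else i₂)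
              (if e₃ = 0 then j₁ else j₂) (if e₄ = 0 then j₁ else j₂)
              (if e₅ = 0 then k₁ else k₂) (if e₆ = 0 then k₁ else k₂) else 0))]
    exact scongr fun e₁ => scongr fun e₂ => lvl2eq _
  · simp [hA]

theorem cnt3 {d1 d2 d3 : ℕ} (hd1 : 2 ≤ d1) (hd2 : 2 ≤ d2) (hd3 : 2 ≤ d3)
    (H : Fin d1 → Fin d1 → Fin d2 → Fin d2 → Fin d3 → Fin d3 → ℝ)
    (h0 : ∀ i p j q k t, 0 ≤ H i p j q k t) :
    (∑ i₁, ∑ i₂, ∑ j₁, ∑ j₂, ∑ k₁, ∑ k₂, if i₁ < i₂ ∧ j₁ < j₂ ∧ k₁ < k₂ then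
        ∑ e₁ : Fin 2, ∑ e₂ : Fin 2, ∑ e₃ : Fin 2, ∑ e₄ : Fin 2, ∑ e₅ : Fin 2, ∑ e₆ : Fin 2,
          H (if e₁ = 0 then i₁ else i₂) (if e₂ = 0 then i₁ else i₂)
            (if e₃ = 0 then j₁ else j₂) (if e₄ = 0 then j₁ else j₂)
            (if e₅ = 0 then k₁ else k₂) (if e₆ = 0 then k₁ else k₂) else 0)
    ≤ ((d1:ℝ) - 1) * ((d2:ℝ) - 1) * ((d3:ℝ) - 1) *
        ∑ i, ∑ p, ∑ j, ∑ q, ∑ k, ∑ t, H i p j q k t := by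
  -- level 3 bound
  have c3 : ∀ i p j q, (∑ k₁, ∑ k₂, if k₁ < k₂ then
      ∑ e₅ : Fin 2, ∑ e₆ : Fin 2, H i p j q (if e₅ = 0 then k₁ else k₂) (if e₆ = 0 then k₁ else k₂)
      else 0) ≤ ((d3:ℝ) - 1) * ∑ k, ∑ t, H i p j q k t := by
    intro i p j q
    have e : ∀ k₁ k₂ : Fin d3, (∑ e₅ : Fin 2, ∑ e₆ : Fin 2,
        H i p j q (if e₅ = 0 then k₁ else k₂) (if e₆ = 0 then k₁ else k₂))
        = H i p j q k₁ k₁ + H i p j q k₁ k₂ + H i p j q k₂ k₁ + H i p j q k₂ k₂ :=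
      fun k₁ k₂ => esum2 k₁ k₂ (fun x y => H i p j q x y)
    rw [show (∑ k₁, ∑ k₂, if k₁ < k₂ then
        ∑ e₅ : Fin 2, ∑ e₆ : Fin 2, H i p j q (if e₅ = 0 then k₁ else k₂) (if e₆ = 0 then k₁ else k₂)
        else 0)
      = ∑ k₁, ∑ k₂, (if k₁ < k₂ then
        H i p j q k₁ k₁ + H i p j q k₁ k₂ + H i p j q k₂ k₁ + H i p j q k₂ k₂ else 0) from
      scongr fun k₁ => scongr fun k₂ => by
        by_cases h : k₁ < k₂
        · rw [if_pos h, if_pos h, e k₁ k₂]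
        · rw [if_neg h, if_neg h]]
    exact cnt1 hd3 (fun k t => H i p j q k t) (fun k t => H i p j q k t)
      (fun k t => h0 i p j q k t) (fun k t => le_refl _)
  -- level-3 aggregate expressions
  set R3 : Fin d1 → Fin d1 → Fin d2 → Fin d2 → ℝ := fun i p j q =>
    ∑ k₁, ∑ k₂, (if k₁ < k₂ then
      ∑ e₅ : Fin 2, ∑ e₆ : Fin 2, H i p j q (if e₅ = 0 then k₁ else k₂) (if e₆ = 0 then k₁ else k₂)
      else 0) with hR3
  have hR3nn : ∀ i p j q, 0 ≤ R3 i p j q := by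
    intro i p j q
    refine Finset.sum_nonneg fun k₁ _ => Finset.sum_nonneg fun k₂ _ => ?_
    by_cases h : k₁ < k₂
    · rw [if_pos h]
      exact Finset.sum_nonneg fun e₅ _ => Finset.sum_nonneg fun e₆ _ => h0 _ _ _ _ _ _
    · rw [if_neg h]
  -- level 2 bound
  have c2 : ∀ i p, (∑ j₁, ∑ j₂, if j₁ < j₂ then
      ∑ e₃ : Fin 2, ∑ e₄ : Fin 2, R3 i p (if e₃ = 0 then j₁ else j₂) (if e₄ = 0 then j₁ else j₂)
      else 0) ≤ ((d2:ℝ) - 1) * ∑ j, ∑ q, ((d3:ℝ) - 1) * ∑ k, ∑ t, H i p j q k t := by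
    intro i p
    rw [show (∑ j₁, ∑ j₂, if j₁ < j₂ then
        ∑ e₃ : Fin 2, ∑ e₄ : Fin 2, R3 i p (if e₃ = 0 then j₁ else j₂) (if e₄ = 0 then j₁ else j₂)
        else 0)
      = ∑ j₁, ∑ j₂, (if j₁ < j₂ then
        R3 i p j₁ j₁ + R3 i p j₁ j₂ + R3 i p j₂ j₁ + R3 i p j₂ j₂ else 0) from
      scongr fun j₁ => scongr fun j₂ => by
        by_cases h : j₁ < j₂
        · rw [if_pos h, if_pos h, esum2 j₁ j₂ (fun x y => R3 i p x y)]
        · rw [if_neg h, if_neg h]]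
    exact cnt1 hd2 (fun j q => R3 i p j q)
      (fun j q => ((d3:ℝ) - 1) * ∑ k, ∑ t, H i p j q k t)
      (fun j q => hR3nn i p j q) (fun j q => c3 i p j q)
  set R2 : Fin d1 → Fin d1 → ℝ := fun i p =>
    ∑ j₁, ∑ j₂, (if j₁ < j₂ then
      ∑ e₃ : Fin 2, ∑ e₄ : Fin 2, R3 i p (if e₃ = 0 then j₁ else j₂) (if e₄ = 0 then j₁ else j₂)
      else 0) with hR2
  have hR2nn : ∀ i p, 0 ≤ R2 i p := by
    intro i p
    refine Finset.sum_nonneg fun j₁ _ => Finset.sum_nonneg fun j₂ _ => ?_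
    by_cases h : j₁ < j₂
    · rw [if_pos h]
      exact Finset.sum_nonneg fun _ _ => Finset.sum_nonneg fun _ _ => hR3nn _ _ _ _
    · rw [if_neg h]
  -- level 1 bound
  have c1 : (∑ i₁, ∑ i₂, if i₁ < i₂ then
      ∑ e₁ : Fin 2, ∑ e₂ : Fin 2, R2 (if e₁ = 0 then i₁ else i₂) (if e₂ = 0 then i₁ else i₂)
      else 0) ≤ ((d1:ℝ) - 1) * ∑ i, ∑ p, ((d2:ℝ) - 1) * ∑ j, ∑ q, ((d3:ℝ) - 1) *
        ∑ k, ∑ t, H i p j q k t := by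
    rw [show (∑ i₁, ∑ i₂, if i₁ < i₂ then
        ∑ e₁ : Fin 2, ∑ e₂ : Fin 2, R2 (if e₁ = 0 then i₁ else i₂) (if e₂ = 0 then i₁ else i₂)
        else 0)
      = ∑ i₁, ∑ i₂, (if i₁ < i₂ then
        R2 i₁ i₁ + R2 i₁ i₂ + R2 i₂ i₁ + R2 i₂ i₂ else 0) from
      scongr fun i₁ => scongr fun i₂ => by
        by_cases h : i₁ < i₂
        · rw [if_pos h, if_pos h, esum2 i₁ i₂ (fun x y => R2 x y)]
        · rw [if_neg h, if_neg h]]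
    exact cnt1 hd1 (fun i p => R2 i p)
      (fun i p => ((d2:ℝ) - 1) * ∑ j, ∑ q, ((d3:ℝ) - 1) * ∑ k, ∑ t, H i p j q k t)
      (fun i p => hR2nn i p) (fun i p => c2 i p)
  -- assemble
  rw [lvl1eq H]
  refine le_trans (le_of_eq rfl) (c1.trans (le_of_eq ?_))
  simp only [Finset.mul_sum]
  exact scongr fun i => scongr fun p => scongr fun j => scongr fun q =>
    scongr fun k => scongr fun t => by ring

set_option maxHeartbeats 2000000 in
/-- for a unit vector `|φ⟩ = Σ a_{ijk}|ijk⟩` in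
`ℂ^{d1}⊗ℂ^{d2}⊗ℂ^{d3}` with `d1, d2, d3 ≥ 2`,
`C₃²(|φ⟩) ≥ (1/((d1−1)(d2−1)(d3−1))) Σ_sub Σ_{1≤m<n≤3} C_{mn}²(|φ⟩_{2⊗2⊗2})`,
the outer sum over all choices of index pairs `i₁<i₂`, `j₁<j₂`, `k₁<k₂`,
and `C_{mn}` the two-qubit concurrence of the reduced matrix on qubits `m,n`
of the unnormalized matrix `|φ⟩_{2⊗2⊗2}⟨φ|_{2⊗2⊗2}`. -/
theorem stmt_9 (hd1 : 2 ≤ d1) (hd2 : 2 ≤ d2) (hd3 : 2 ≤ d3)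
    (a : Fin d1 × Fin d2 × Fin d3 → ℂ)
    (ha : ∑ x, Complex.normSq (a x) = 1) :
    (pureC3 a) ^ 2 ≥
      (1 / (((d1 : ℝ) - 1) * ((d2 : ℝ) - 1) * ((d3 : ℝ) - 1))) *
        ∑ i₁, ∑ i₂, ∑ j₁, ∑ j₂, ∑ k₁, ∑ k₂,
          if i₁ < i₂ ∧ j₁ < j₂ ∧ k₁ < k₂ then
            (C2unnorm (red12 (outer (subvec a i₁ i₂ j₁ j₂ k₁ k₂)))) ^ 2 +
            (C2unnorm (red13 (outer (subvec a i₁ i₂ j₁ j₂ k₁ k₂)))) ^ 2 +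
            (C2unnorm (red23 (outer (subvec a i₁ i₂ j₁ j₂ k₁ k₂)))) ^ 2
          else 0 := by

  classical
  set Fa : Fin d1 → Fin d1 → Fin d2 → Fin d2 → Fin d3 → Fin d3 → ℝ := fun i p j q k t =>
    Complex.normSq (a (i,j,k) * a (p,q,t) - a (i,q,t) * a (p,j,k)) +
    Complex.normSq (a (i,j,k) * a (p,q,t) - a (i,q,k) * a (p,j,t)) +
    Complex.normSq (a (i,j,k) * a (p,q,t) - a (i,j,t) * a (p,q,k)) with hFadef
  have hFann : ∀ i p j q k t, 0 ≤ Fa i p j q k t := fun i p j q k t =>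
    add_nonneg (add_nonneg (Complex.normSq_nonneg _) (Complex.normSq_nonneg _))
      (Complex.normSq_nonneg _)
  set YR1 : ℝ := ∑ i, ∑ p, ∑ j, ∑ q, ∑ k, ∑ t,
    Complex.normSq (a (i,j,k) * a (p,q,t) - a (i,q,t) * a (p,j,k)) with hYR1
  set YR2 : ℝ := ∑ i, ∑ p, ∑ j, ∑ q, ∑ k, ∑ t,
    Complex.normSq (a (i,j,k) * a (p,q,t) - a (i,q,k) * a (p,j,t)) with hYR2
  set YR3 : ℝ := ∑ i, ∑ p, ∑ j, ∑ q, ∑ k, ∑ t,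
    Complex.normSq (a (i,j,k) * a (p,q,t) - a (i,j,t) * a (p,q,k)) with hYR3
  set YR : ℝ := YR1 + YR2 + YR3 with hYRdef
  have hYR1nn : 0 ≤ YR1 := by
    rw [hYR1]
    refine Finset.sum_nonneg fun _ _ => Finset.sum_nonneg fun _ _ => Finset.sum_nonneg fun _ _ =>
      Finset.sum_nonneg fun _ _ => Finset.sum_nonneg fun _ _ => Finset.sum_nonneg fun _ _ => ?_
    exact Complex.normSq_nonneg _
  have hYR2nn : 0 ≤ YR2 := by
    rw [hYR2]
    refine Finset.sum_nonneg fun _ _ => Finset.sum_nonneg fun _ _ => Finset.sum_nonneg fun _ _ =>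
      Finset.sum_nonneg fun _ _ => Finset.sum_nonneg fun _ _ => Finset.sum_nonneg fun _ _ => ?_
    exact Complex.normSq_nonneg _
  have hYR3nn : 0 ≤ YR3 := by
    rw [hYR3]
    refine Finset.sum_nonneg fun _ _ => Finset.sum_nonneg fun _ _ => Finset.sum_nonneg fun _ _ =>
      Finset.sum_nonneg fun _ _ => Finset.sum_nonneg fun _ _ => Finset.sum_nonneg fun _ _ => ?_
    exact Complex.normSq_nonneg _
  have hYRnn : 0 ≤ YR := by rw [hYRdef]; linarith
  have hYRFa : (∑ i, ∑ p, ∑ j, ∑ q, ∑ k, ∑ t, Fa i p j q k t) = YR := by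
    rw [hYRdef, hYR1, hYR2, hYR3, hFadef]
    simp only [Finset.sum_add_distrib]
  -- normalization
  have hNc : (∑ x, a x * (starRingEnd ℂ) (a x)) = 1 := by
    rw [scongr fun x => Complex.mul_conj (a x), ← Complex.ofReal_sum, ha, Complex.ofReal_one]
  -- the three complex identities
  have l1 := L1 a
  have l2 := L2 a
  have l3 := L3 a
  rw [hNc] at l1 l2 l3
  rw [one_pow, mul_one] at l1 l2 l3
  have hY1cast : S (fun i p j q k t => ((a (i,j,k) * a (p,q,t)) - (a (i,q,t) * a (p,j,k))) *
      (starRingEnd ℂ) ((a (i,j,k) * a (p,q,t)) - (a (i,q,t) * a (p,j,k)))) = ((YR1 : ℝ) : ℂ) := by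
    rw [hYR1]
    unfold S
    push_cast
    exact scongr fun i => scongr fun p => scongr fun j => scongr fun q => scongr fun k =>
      scongr fun t => Complex.mul_conj _
  have hY2cast : S (fun i p j q k t => ((a (i,j,k) * a (p,q,t)) - (a (i,q,k) * a (p,j,t))) *
      (starRingEnd ℂ) ((a (i,j,k) * a (p,q,t)) - (a (i,q,k) * a (p,j,t)))) = ((YR2 : ℝ) : ℂ) := by
    rw [hYR2]
    unfold S
    push_cast
    exact scongr fun i => scongr fun p => scongr fun j => scongr fun q => scongr fun k =>
      scongr fun t => Complex.mul_conj _
  have hY3cast : S (fun i p j q k t => ((a (i,j,k) * a (p,q,t)) - (a (i,j,t) * a (p,q,k))) *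
      (starRingEnd ℂ) ((a (i,j,k) * a (p,q,t)) - (a (i,j,t) * a (p,q,k)))) = ((YR3 : ℝ) : ℂ) := by
    rw [hYR3]
    unfold S
    push_cast
    exact scongr fun i => scongr fun p => scongr fun j => scongr fun q => scongr fun k =>
      scongr fun t => Complex.mul_conj _
  have hcast : ((YR : ℝ) : ℂ) =
      S (fun i p j q k t => ((a (i,j,k) * a (p,q,t)) - (a (i,q,t) * a (p,j,k))) *
        (starRingEnd ℂ) ((a (i,j,k) * a (p,q,t)) - (a (i,q,t) * a (p,j,k)))) +
      S (fun i p j q k t => ((a (i,j,k) * a (p,q,t)) - (a (i,q,k) * a (p,j,t))) *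
        (starRingEnd ℂ) ((a (i,j,k) * a (p,q,t)) - (a (i,q,k) * a (p,j,t)))) +
      S (fun i p j q k t => ((a (i,j,k) * a (p,q,t)) - (a (i,j,t) * a (p,q,k))) *
        (starRingEnd ℂ) ((a (i,j,k) * a (p,q,t)) - (a (i,j,t) * a (p,q,k)))) := by
    rw [hY1cast, hY2cast, hY3cast, hYRdef]
    push_cast
    ring
  have hsum : tr1sq (outer a) + tr2sq (outer a) + tr3sq (outer a) +
      tr12sq (outer a) + tr13sq (outer a) + tr23sq (outer a) = 6 - ((YR : ℝ) : ℂ) := by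
    linear_combination l1 + l2 + l3 + hcast
  have hre : (tr1sq (outer a) + tr2sq (outer a) + tr3sq (outer a) +
      tr12sq (outer a) + tr13sq (outer a) + tr23sq (outer a)).re = 6 - YR := by
    rw [hsum]
    simp
  have hLHS : pureC3 a ^ 2 = (1/2) * YR := by
    unfold pureC3
    rw [hre]
    have harg : ((2:ℝ) ^ (3:ℕ) - 2) - (6 - YR) = YR := by norm_num
    rw [harg, mul_pow, Real.sq_sqrt hYRnn]
    have hcoef : ((2:ℝ) ^ ((1:ℝ) - (3:ℝ)/2))^2 = 1/2 := by
      rw [← Real.rpow_natCast ((2:ℝ) ^ ((1:ℝ) - (3:ℝ)/2)) 2, ← Real.rpow_mul (by norm_num : (0:ℝ) ≤ 2)]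
      rw [show ((1:ℝ) - (3:ℝ)/2) * ((2:ℕ):ℝ) = -1 by push_cast; ring]
      rw [Real.rpow_neg_one]
      norm_num
    rw [hcoef]
  -- RHS bound
  have hinner : ∀ (i₁ i₂ : Fin d1) (j₁ j₂ : Fin d2) (k₁ k₂ : Fin d3),
      (if i₁ < i₂ ∧ j₁ < j₂ ∧ k₁ < k₂ then
        (C2unnorm (red12 (outer (subvec a i₁ i₂ j₁ j₂ k₁ k₂)))) ^ 2 +
        (C2unnorm (red13 (outer (subvec a i₁ i₂ j₁ j₂ k₁ k₂)))) ^ 2 +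
        (C2unnorm (red23 (outer (subvec a i₁ i₂ j₁ j₂ k₁ k₂)))) ^ 2
      else 0) ≤
      (if i₁ < i₂ ∧ j₁ < j₂ ∧ k₁ < k₂ then (1/2) *
        ∑ e₁ : Fin 2, ∑ e₂ : Fin 2, ∑ e₃ : Fin 2, ∑ e₄ : Fin 2, ∑ e₅ : Fin 2, ∑ e₆ : Fin 2,
          Fa (if e₁ = 0 then i₁ else i₂) (if e₂ = 0 then i₁ else i₂)
            (if e₃ = 0 then j₁ else j₂) (if e₄ = 0 then j₁ else j₂)
            (if e₅ = 0 then k₁ else k₂) (if e₆ = 0 then k₁ else k₂) else 0) := by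
    intro i₁ i₂ j₁ j₂ k₁ k₂
    by_cases hc : i₁ < i₂ ∧ j₁ < j₂ ∧ k₁ < k₂
    · rw [if_pos hc, if_pos hc]
      refine le_trans (subBound (subvec a i₁ i₂ j₁ j₂ k₁ k₂)) (le_of_eq ?_)
      rfl
    · rw [if_neg hc, if_neg hc]
  have step1 : (∑ i₁, ∑ i₂, ∑ j₁, ∑ j₂, ∑ k₁, ∑ k₂,
      if i₁ < i₂ ∧ j₁ < j₂ ∧ k₁ < k₂ then
        (C2unnorm (red12 (outer (subvec a i₁ i₂ j₁ j₂ k₁ k₂)))) ^ 2 +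
        (C2unnorm (red13 (outer (subvec a i₁ i₂ j₁ j₂ k₁ k₂)))) ^ 2 +
        (C2unnorm (red23 (outer (subvec a i₁ i₂ j₁ j₂ k₁ k₂)))) ^ 2
      else 0) ≤
      ∑ i₁, ∑ i₂, ∑ j₁, ∑ j₂, ∑ k₁, ∑ k₂,
      (if i₁ < i₂ ∧ j₁ < j₂ ∧ k₁ < k₂ then (1/2) *
        ∑ e₁ : Fin 2, ∑ e₂ : Fin 2, ∑ e₃ : Fin 2, ∑ e₄ : Fin 2, ∑ e₅ : Fin 2, ∑ e₆ : Fin 2,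
          Fa (if e₁ = 0 then i₁ else i₂) (if e₂ = 0 then i₁ else i₂)
            (if e₃ = 0 then j₁ else j₂) (if e₄ = 0 then j₁ else j₂)
            (if e₅ = 0 then k₁ else k₂) (if e₆ = 0 then k₁ else k₂) else 0) := by
    refine Finset.sum_le_sum fun i₁ _ => Finset.sum_le_sum fun i₂ _ =>
      Finset.sum_le_sum fun j₁ _ => Finset.sum_le_sum fun j₂ _ =>
      Finset.sum_le_sum fun k₁ _ => Finset.sum_le_sum fun k₂ _ => ?_
    exact hinner i₁ i₂ j₁ j₂ k₁ k₂
  have step2 : (∑ i₁, ∑ i₂, ∑ j₁, ∑ j₂, ∑ k₁, ∑ k₂,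
      (if i₁ < i₂ ∧ j₁ < j₂ ∧ k₁ < k₂ then (1/2) *
        ∑ e₁ : Fin 2, ∑ e₂ : Fin 2, ∑ e₃ : Fin 2, ∑ e₄ : Fin 2, ∑ e₅ : Fin 2, ∑ e₆ : Fin 2,
          Fa (if e₁ = 0 then i₁ else i₂) (if e₂ = 0 then i₁ else i₂)
            (if e₃ = 0 then j₁ else j₂) (if e₄ = 0 then j₁ else j₂)
            (if e₅ = 0 then k₁ else k₂) (if e₆ = 0 then k₁ else k₂) else 0))
      = (1/2) * ∑ i₁, ∑ i₂, ∑ j₁, ∑ j₂, ∑ k₁, ∑ k₂,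
      (if i₁ < i₂ ∧ j₁ < j₂ ∧ k₁ < k₂ then
        ∑ e₁ : Fin 2, ∑ e₂ : Fin 2, ∑ e₃ : Fin 2, ∑ e₄ : Fin 2, ∑ e₅ : Fin 2, ∑ e₆ : Fin 2,
          Fa (if e₁ = 0 then i₁ else i₂) (if e₂ = 0 then i₁ else i₂)
            (if e₃ = 0 then j₁ else j₂) (if e₄ = 0 then j₁ else j₂)
            (if e₅ = 0 then k₁ else k₂) (if e₆ = 0 then k₁ else k₂) else 0) := by
    rw [mulsum6]
    refine scongr fun i₁ => scongr fun i₂ => scongr fun j₁ => scongr fun j₂ =>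
      scongr fun k₁ => scongr fun k₂ => ?_
    by_cases hc : i₁ < i₂ ∧ j₁ < j₂ ∧ k₁ < k₂
    · rw [if_pos hc, if_pos hc]
    · rw [if_neg hc, if_neg hc, mul_zero]
  have step3 := cnt3 hd1 hd2 hd3 Fa hFann
  rw [hYRFa] at step3
  -- put it together
  rw [ge_iff_le, hLHS]
  have hd1' : (1:ℝ) ≤ (d1:ℝ) - 1 := by
    have : (2:ℝ) ≤ (d1:ℝ) := by exact_mod_cast hd1
    linarith
  have hd2' : (1:ℝ) ≤ (d2:ℝ) - 1 := by
    have : (2:ℝ) ≤ (d2:ℝ) := by exact_mod_cast hd2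
    linarith
  have hd3' : (1:ℝ) ≤ (d3:ℝ) - 1 := by
    have : (2:ℝ) ≤ (d3:ℝ) := by exact_mod_cast hd3
    linarith
  have hPpos : 0 < ((d1:ℝ) - 1) * ((d2:ℝ) - 1) * ((d3:ℝ) - 1) :=
    mul_pos (mul_pos (lt_of_lt_of_le zero_lt_one hd1') (lt_of_lt_of_le zero_lt_one hd2'))
      (lt_of_lt_of_le zero_lt_one hd3')
  have hhalf : (1/2 : ℝ) * ∑ i₁, ∑ i₂, ∑ j₁, ∑ j₂, ∑ k₁, ∑ k₂,
      (if i₁ < i₂ ∧ j₁ < j₂ ∧ k₁ < k₂ then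
        ∑ e₁ : Fin 2, ∑ e₂ : Fin 2, ∑ e₃ : Fin 2, ∑ e₄ : Fin 2, ∑ e₅ : Fin 2, ∑ e₆ : Fin 2,
          Fa (if e₁ = 0 then i₁ else i₂) (if e₂ = 0 then i₁ else i₂)
            (if e₃ = 0 then j₁ else j₂) (if e₄ = 0 then j₁ else j₂)
            (if e₅ = 0 then k₁ else k₂) (if e₆ = 0 then k₁ else k₂) else 0)
      ≤ (1/2) * (((d1:ℝ) - 1) * ((d2:ℝ) - 1) * ((d3:ℝ) - 1) * YR) :=
    mul_le_mul_of_nonneg_left step3 (by norm_num)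
  have hchain := le_trans step1 (le_trans (le_of_eq step2) hhalf)
  calc (1 / (((d1:ℝ) - 1) * ((d2:ℝ) - 1) * ((d3:ℝ) - 1))) *
        ∑ i₁, ∑ i₂, ∑ j₁, ∑ j₂, ∑ k₁, ∑ k₂,
          (if i₁ < i₂ ∧ j₁ < j₂ ∧ k₁ < k₂ then
            (C2unnorm (red12 (outer (subvec a i₁ i₂ j₁ j₂ k₁ k₂)))) ^ 2 +
            (C2unnorm (red13 (outer (subvec a i₁ i₂ j₁ j₂ k₁ k₂)))) ^ 2 +
            (C2unnorm (red23 (outer (subvec a i₁ i₂ j₁ j₂ k₁ k₂)))) ^ 2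
          else 0)
      ≤ (1 / (((d1:ℝ) - 1) * ((d2:ℝ) - 1) * ((d3:ℝ) - 1))) *
          ((1/2) * (((d1:ℝ) - 1) * ((d2:ℝ) - 1) * ((d3:ℝ) - 1) * YR)) := by
        apply mul_le_mul_of_nonneg_left hchain
        positivity
    _ = (1/2) * YR := by field_simp


end Stmt9
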